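/- Let P be a finite bounded weakly ranked poset of weak rank at most 6 whose Chow polynomial H_P(t) = Σ h_i t^i has coefficient sequence h that is palindromic, unimodal, and whose differential sequence Δh = (h_0, h_1 - h_0, h_2 - h_1) (of length at most 3, starting with h_0 = 1) is an O-sequence. Then h is log-concave. -/
import Mathlib


/-- The rank gap along a chain (with predecessor of the first element being `⊥`, of rank 0). -/
def gap {P : Type} [PartialOrder P] (ρ : P → ℕ) {s : ℕ} (f : Fin s → P) (i : Fin s) : ℕ :=
  ρ (f i) - (if (i : ℕ) = 0 then 0
    else ρ (f ⟨(i : ℕ) - 1, lt_of_le_of_lt (Nat.sub_le _ _) i.2⟩))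

open scoped Classical in
/-- The (characteristic) Chow polynomial of a finite bounded weakly ranked poset. -/
noncomputable def chowPoly {P : Type} [Fintype P] [PartialOrder P] [BoundedOrder P]
    (ρ : P → ℕ) : Polynomial ℤ :=
  ∑ s ∈ Finset.range (Fintype.card P + 1),
    ∑ f ∈ Finset.univ.filter
        (fun f : Fin s → P => (∀ i j : Fin s, i < j → f i < f j) ∧ ∀ i, (⊥ : P) < f i),
      ∏ i : Fin s, ∑ j ∈ Finset.Ico 1 (gap ρ f i), (Polynomial.X : Polynomial ℤ) ^ j

/-- The degree of a monomial. -/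
def mdeg {σ : Type} (m : σ →₀ ℕ) : ℕ := m.sum fun _ e => e

lemma mdeg_eq_sum {σ : Type} (m : σ →₀ ℕ) : mdeg m = ∑ b ∈ m.support, m b := rfl

lemma support_card_le_mdeg {σ : Type} (m : σ →₀ ℕ) : m.support.card ≤ mdeg m := by
  rw [mdeg_eq_sum, Finset.card_eq_sum_ones]
  exact Finset.sum_le_sum fun b hb => Nat.one_le_iff_ne_zero.2 (Finsupp.mem_support_iff.1 hb)

lemma mdeg_single {σ : Type} (a : σ) : mdeg (Finsupp.single a 1) = 1 := by
  rw [mdeg]; exact Finsupp.sum_single_index rfl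

lemma eval_of_mdeg_two {σ : Type} [DecidableEq σ] (m : σ →₀ ℕ) (h2 : mdeg m = 2) {a : σ}
    (ha : a ∈ m.support) : m a = 3 - m.support.card := by
  have hsum : ∑ b ∈ m.support, m b = 2 := by rw [← mdeg_eq_sum, h2]
  have hins : ∑ b ∈ m.support, m b = m a + ∑ b ∈ m.support.erase a, m b :=
    (Finset.add_sum_erase _ _ ha).symm
  have hcard : m.support.card ≤ 2 := h2 ▸ support_card_le_mdeg m
  have hc1 : 1 ≤ m.support.card := Finset.card_pos.2 ⟨a, ha⟩
  have hma : 1 ≤ m a := Nat.one_le_iff_ne_zero.2 (Finsupp.mem_support_iff.1 ha)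
  have hecard : (m.support.erase a).card = m.support.card - 1 := Finset.card_erase_of_mem ha
  interval_cases hc : m.support.card
  · have : m.support.erase a = ∅ := Finset.card_eq_zero.1 (by omega)
    rw [this, Finset.sum_empty] at hins
    omega
  · have hge : (m.support.erase a).card ≤ ∑ b ∈ m.support.erase a, m b := by
      rw [Finset.card_eq_sum_ones]
      exact Finset.sum_le_sum fun b hb => Nat.one_le_iff_ne_zero.2
        (Finsupp.mem_support_iff.1 (Finset.mem_of_mem_erase hb))
    omega

lemma macaulay_two {σ : Type} [DecidableEq σ] (M : Finset (σ →₀ ℕ))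
    (hdc : ∀ m ∈ M, ∀ m' : σ →₀ ℕ, m' ≤ m → m' ∈ M) :
    (M.filter fun m => mdeg m = 2).card ≤
      ((M.filter fun m => mdeg m = 1).card + 1).choose 2 := by
  set M1 := M.filter fun m => mdeg m = 1 with hM1
  set V : Finset σ := M1.biUnion Finsupp.support with hV
  have hVcard : V.card ≤ M1.card := by
    calc V.card ≤ ∑ m ∈ M1, m.support.card := Finset.card_biUnion_le
    _ ≤ ∑ _m ∈ M1, 1 := Finset.sum_le_sum (fun m hm => by
        have h1 : mdeg m = 1 := (Finset.mem_filter.mp hm).2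
        have := support_card_le_mdeg m; omega)
    _ = M1.card := by simp
  have hsup : ∀ m ∈ M.filter (fun m => mdeg m = 2), m.support ⊆ V := by
    intro m hm a ha
    obtain ⟨hmM, hm2⟩ := Finset.mem_filter.mp hm
    have hle : Finsupp.single a 1 ≤ m :=
      Finsupp.single_le_iff.2 (Nat.one_le_iff_ne_zero.2 (Finsupp.mem_support_iff.1 ha))
    have hmem : Finsupp.single a 1 ∈ M1 :=
      Finset.mem_filter.2 ⟨hdc m hmM _ hle, mdeg_single a⟩
    exact Finset.mem_biUnion.2 ⟨_, hmem, by simp⟩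
  have hkey : (M.filter fun m => mdeg m = 2).card ≤
      (V.powersetCard 1 ∪ V.powersetCard 2).card := by
    apply Finset.card_le_card_of_injOn (fun m => m.support)
    · intro m hm
      have hm2 : mdeg m = 2 := (Finset.mem_filter.mp hm).2
      have hc2 : m.support.card ≤ 2 := hm2 ▸ support_card_le_mdeg m
      have hc1 : 1 ≤ m.support.card := by
        rcases Nat.eq_zero_or_pos m.support.card with h0 | h
        · exfalso
          have he : m.support = ∅ := Finset.card_eq_zero.1 h0
          have : (∑ b ∈ m.support, m b) = 0 := by rw [he, Finset.sum_empty]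
          rw [← mdeg_eq_sum, hm2] at this; omega
        · exact h
      rcases (by omega : m.support.card = 1 ∨ m.support.card = 2) with h | h
      · exact Finset.mem_union_left _ (Finset.mem_powersetCard.2 ⟨hsup m hm, h⟩)
      · exact Finset.mem_union_right _ (Finset.mem_powersetCard.2 ⟨hsup m hm, h⟩)
    · intro m1 hm1 m2 hm2 hss
      simp only [Finset.coe_filter, Set.mem_setOf_eq] at hm1 hm2
      simp only at hss
      ext a
      by_cases ha : a ∈ m1.support
      · have ha2 : a ∈ m2.support := hss ▸ ha
        rw [eval_of_mdeg_two m1 hm1.2 ha, eval_of_mdeg_two m2 hm2.2 ha2, hss]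
      · have ha2 : a ∉ m2.support := hss ▸ ha
        rw [Finsupp.notMem_support_iff.1 ha, Finsupp.notMem_support_iff.1 ha2]
  have hdisj : Disjoint (V.powersetCard 1) (V.powersetCard 2) := by
    rw [Finset.disjoint_left]
    intro S h1 h2
    have := (Finset.mem_powersetCard.1 h1).2
    have := (Finset.mem_powersetCard.1 h2).2
    omega
  rw [Finset.card_union_of_disjoint hdisj, Finset.card_powersetCard,
    Finset.card_powersetCard] at hkey
  calc (M.filter fun m => mdeg m = 2).card ≤ V.card.choose 1 + V.card.choose 2 := hkey
    _ = (V.card + 1).choose 2 := (Nat.choose_succ_succ _ _).symm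
    _ ≤ (M1.card + 1).choose 2 := Nat.choose_le_choose 2 (by omega)

lemma two_mul_choose_two (n : ℕ) : 2 * n.choose 2 = n * (n - 1) := by
  induction n with
  | zero => rfl
  | succ m ih =>
    rw [Nat.choose_succ_succ, Nat.mul_add, ih, Nat.choose_one_right, Nat.succ_sub_one]
    cases m with
    | zero => rfl
    | succ k => rw [Nat.succ_sub_one]; ring

lemma chow_coeff_zero {P : Type} [Fintype P] [PartialOrder P] [BoundedOrder P] (ρ : P → ℕ) :
    (chowPoly ρ).coeff 0 = 1 := by
  classical
  rw [chowPoly, Polynomial.finset_sum_coeff]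
  refine Eq.trans (Finset.sum_congr rfl fun s _ => ?_)
    (?_ : (∑ s ∈ Finset.range (Fintype.card P + 1), if s = 0 then (1 : ℤ) else 0) = 1)
  · rw [Polynomial.finset_sum_coeff]
    rcases Nat.eq_zero_or_pos s with rfl | hs
    · rw [if_pos rfl]
      have h1 : ∀ f ∈ Finset.univ.filter
          (fun f : Fin 0 → P => (∀ i j : Fin 0, i < j → f i < f j) ∧ ∀ i, (⊥ : P) < f i),
          (∏ i : Fin 0, ∑ j ∈ Finset.Ico 1 (gap ρ f i), (Polynomial.X : Polynomial ℤ) ^ j).coeff 0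
            = 1 := by
        intro f _
        simp
      rw [Finset.sum_congr rfl h1, Finset.sum_const, Finset.filter_true_of_mem
        (fun f _ => ⟨fun i j _ => i.elim0, fun i => i.elim0⟩)]
      simp
    · rw [if_neg (by omega)]
      apply Finset.sum_eq_zero
      intro f _
      rw [← Polynomial.constantCoeff_apply, map_prod]
      apply Finset.prod_eq_zero (Finset.mem_univ (⟨0, hs⟩ : Fin s))
      rw [map_sum]
      apply Finset.sum_eq_zero
      intro j hj
      have h1 : 1 ≤ j := (Finset.mem_Ico.1 hj).1
      rw [Polynomial.constantCoeff_apply, Polynomial.coeff_X_pow]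
      simp only [if_neg (by omega : ¬ (0 : ℕ) = j)]
  · rw [Finset.sum_ite_eq' (Finset.range (Fintype.card P + 1)) 0 (fun _ => (1:ℤ))]
    simp

/-- Let `P` be a finite bounded weakly ranked poset of weak rank `n ≤ 6` whose
Chow polynomial has coefficient sequence `h` that is palindromic, unimodal, and whose
differential sequence `Δh = (h_0, h_1 - h_0, ..., h_{⌊(n-1)/2⌋} - h_{⌊(n-1)/2⌋-1})` is an
`O`-sequence (the `h`-vector of a monomial order ideal). Then `h` is log-concave. -/
theorem stmt10 {P : Type} [Fintype P] [PartialOrder P] [BoundedOrder P]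
    (n : ℕ) (ρ : P → ℕ)
    (hmono : ∀ x y : P, x < y → ρ x < ρ y) (hbot : ρ ⊥ = 0) (htop : ρ ⊤ = n)
    (hn : n ≤ 6)
    (h : ℕ → ℤ) (hh : ∀ k, h k = (chowPoly ρ).coeff k)
    (hpal : ∀ i ≤ n - 1, h i = h (n - 1 - i))
    (huni : ∃ j ≤ n - 1, (∀ a b, a ≤ b → b ≤ j → h a ≤ h b) ∧
      (∀ a b, j ≤ a → a ≤ b → b ≤ n - 1 → h b ≤ h a))
    (hO : ∃ (σ : Type) (_ : DecidableEq σ) (M : Finset (σ →₀ ℕ)),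
      (∀ m ∈ M, ∀ m' : σ →₀ ℕ, m' ≤ m → m' ∈ M) ∧
      ∀ i ≤ (n - 1) / 2,
        ((M.filter fun m => mdeg m = i).card : ℤ) = if i = 0 then h 0 else h i - h (i - 1)) :
    ∀ i, 1 ≤ i → i + 1 ≤ n - 1 → h (i - 1) * h (i + 1) ≤ h i ^ 2 := by
  intro i hi1 hi2
  have h0 : h 0 = 1 := by rw [hh]; exact chow_coeff_zero ρ
  obtain ⟨j, hj, inc, dec⟩ := huni
  have hOb : 5 ≤ n → 2 * (h 2 - h 1) ≤ (h 1 - 1) * h 1 := by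
    intro hn5
    obtain ⟨σ, inst, M, hdc, hcard⟩ := hO
    have hc1 := hcard 1 (by omega)
    have hc2 := hcard 2 (by omega)
    rw [if_neg (by omega)] at hc1
    rw [if_neg (by omega)] at hc2
    norm_num at hc1 hc2
    have hmac := macaulay_two M hdc
    have htm := two_mul_choose_two ((M.filter fun m => mdeg m = 1).card + 1)
    rw [Nat.succ_sub_one] at htm
    set v := (M.filter fun m => mdeg m = 1).card with hvdef
    set w := (M.filter fun m => mdeg m = 2).card with hwdef
    have hcast : (w : ℤ) ≤ (((v + 1).choose 2 : ℕ) : ℤ) := by exact_mod_cast hmac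
    have h2c : (2 : ℤ) * (((v + 1).choose 2 : ℕ) : ℤ) = ((v : ℤ) + 1) * (v : ℤ) := by
      exact_mod_cast htm
    have hv : (v : ℤ) = h 1 - 1 := by rw [hc1, h0]
    calc 2 * (h 2 - h 1) = 2 * (w : ℤ) := by rw [hc2]
      _ ≤ ((v : ℤ) + 1) * (v : ℤ) := by linarith
      _ = (h 1 - 1) * h 1 := by rw [hv]; ring
  interval_cases n
  · exact absurd hi2 (by omega)
  · exact absurd hi2 (by omega)
  · exact absurd hi2 (by omega)
  · -- n = 3
    have e2 : h 2 = 1 := by have := hpal 0 (by omega); norm_num at this; omega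
    have e1 : 1 ≤ h 1 := by
      rcases Nat.eq_zero_or_pos j with rfl | hj0
      · have := dec 1 2 (by omega) (by omega) (by omega); omega
      · have := inc 0 1 (by omega) (by omega); omega
    have hiu : i ≤ 1 := by omega
    interval_cases i
    norm_num [e2]
    nlinarith
  · -- n = 4
    have e3 : h 3 = 1 := by have := hpal 0 (by omega); norm_num at this; omega
    have e21 : h 2 = h 1 := by have := hpal 1 (by omega); norm_num at this; omega
    have e1 : 1 ≤ h 1 := by
      rcases Nat.eq_zero_or_pos j with rfl | hj0
      · have := dec 1 3 (by omega) (by omega) (by omega); omega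
      · have := inc 0 1 (by omega) (by omega); omega
    have hiu : i ≤ 2 := by omega
    interval_cases i
    · norm_num [e21]
      nlinarith
    · norm_num [e3, e21]
      nlinarith
  · -- n = 5
    have e4 : h 4 = 1 := by have := hpal 0 (by omega); norm_num at this; omega
    have e31 : h 3 = h 1 := by have := hpal 1 (by omega); norm_num at this; omega
    have e1 : 1 ≤ h 1 := by
      rcases Nat.eq_zero_or_pos j with rfl | hj0
      · have := dec 1 4 (by omega) (by omega) (by omega); omega
      · have := inc 0 1 (by omega) (by omega); omega
    have e21 : h 1 ≤ h 2 := by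
      rcases le_or_gt 2 j with hj2 | hj2
      · exact inc 1 2 (by omega) hj2
      · have := dec 2 3 (by omega) (by omega) (by omega); omega
    have hq := hOb (by omega)
    have hiu : i ≤ 3 := by omega
    interval_cases i
    · norm_num [h0]
      nlinarith [mul_nonneg (by linarith : (0:ℤ) ≤ h 1 - 1) (by linarith : (0:ℤ) ≤ h 1)]
    · norm_num [e31]
      nlinarith
    · norm_num [e4, e31]
      nlinarith [mul_nonneg (by linarith : (0:ℤ) ≤ h 1 - 1) (by linarith : (0:ℤ) ≤ h 1)]
  · -- n = 6
    have e5 : h 5 = 1 := by have := hpal 0 (by omega); norm_num at this; omega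
    have e41 : h 4 = h 1 := by have := hpal 1 (by omega); norm_num at this; omega
    have e32 : h 3 = h 2 := by have := hpal 2 (by omega); norm_num at this; omega
    have e1 : 1 ≤ h 1 := by
      rcases Nat.eq_zero_or_pos j with rfl | hj0
      · have := dec 1 5 (by omega) (by omega) (by omega); omega
      · have := inc 0 1 (by omega) (by omega); omega
    have e21 : h 1 ≤ h 2 := by
      rcases le_or_gt 2 j with hj2 | hj2
      · exact inc 1 2 (by omega) hj2
      · have d1 := dec 2 3 (by omega) (by omega) (by omega)
        have d2 := dec 3 4 (by omega) (by omega) (by omega)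
        omega
    have hq := hOb (by omega)
    have hiu : i ≤ 4 := by omega
    interval_cases i
    · norm_num [h0]
      nlinarith [mul_nonneg (by linarith : (0:ℤ) ≤ h 1 - 1) (by linarith : (0:ℤ) ≤ h 1)]
    · norm_num [e32]
      nlinarith
    · norm_num [e41, e32]
      nlinarith
    · norm_num [e5, e41, e32]
      nlinarith [mul_nonneg (by linarith : (0:ℤ) ≤ h 1 - 1) (by linarith : (0:ℤ) ≤ h 1)]
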